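/- (Theorem 2, high comparable costs regime) Fix G > 0 and costs C_i, C_j > 0 with C_i + C_j > 1 and |C_j − C_i| ≤ 1. Then the pair B_i* = (1 + C_j − C_i)·G·e^{−(C_i+C_j+3)/2}/2 and B_j* = (1 + C_i − C_j)·G·e^{−(C_i+C_j+3)/2}/2 is the unique Nash equilibrium of the investment game, and the equilibrium profits are π_i = ((1 + C_j − C_i)/2)²·G·e^{−(C_i+C_j+3)/2} and π_j = ((1 + C_i − C_j)/2)²·G·e^{−(C_i+C_j+3)/2}. -/

import Mathlib

/-- Operator profit in the high-SNR investment game: the operator with unit cost `C`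
leasing `B` while the competitor leases `B'` earns `B·(ln(G/(B + B')) − 1 − C)`. -/
noncomputable def invProfit (G C B B' : ℝ) : ℝ :=
  B * (Real.log (G / (B + B')) - 1 - C)

/-- `(Bi, Bj)` is a Nash equilibrium of the high-SNR investment game with coupled
strategy set `{(Bi, Bj) : Bi, Bj ≥ 0, Bi + Bj ≤ G·e^{−2}}`. -/
def IsInvestmentNE (G Ci Cj Bi Bj : ℝ) : Prop :=
  0 ≤ Bi ∧ 0 ≤ Bj ∧ Bi + Bj ≤ G * Real.exp (-2) ∧
  (∀ B : ℝ, 0 ≤ B → B ≤ G * Real.exp (-2) - Bj → invProfit G Ci B Bj ≤ invProfit G Ci Bi Bj) ∧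
  (∀ B : ℝ, 0 ≤ B → B ≤ G * Real.exp (-2) - Bi → invProfit G Cj B Bi ≤ invProfit G Cj Bj Bi)

lemma br_le (G C B' Bstar : ℝ) (hG : 0 < G) (hB' : 0 ≤ B')
    (hS : 0 < Bstar + B')
    (hfoc : Real.log (G / (Bstar + B')) = 1 + C + Bstar / (Bstar + B')) :
    ∀ B, 0 ≤ B → invProfit G C B B' ≤ invProfit G C Bstar B' := by
  intro B hB
  unfold invProfit
  rcases eq_or_lt_of_le (by linarith : (0:ℝ) ≤ B + B') with hT | hT
  · have hB0 : B = 0 := by linarith [hB', hB]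
    have hBs' : 0 < Bstar := by nlinarith [hS]
    rw [hB0, hfoc]
    have : (0:ℝ) ≤ Bstar * (1 + C + Bstar / (Bstar + B') - 1 - C) := by
      have : (1:ℝ) + C + Bstar / (Bstar + B') - 1 - C = Bstar / (Bstar + B') := by ring
      rw [this]; positivity
    linarith [this]
  · have hlog : Real.log (G / (B + B')) =
        Real.log (G / (Bstar + B')) + Real.log ((Bstar + B') / (B + B')) := by
      rw [Real.log_div hG.ne' hT.ne', Real.log_div hG.ne' hS.ne',
        Real.log_div hS.ne' hT.ne']; ring
    rw [hlog, hfoc]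
    have hln : Real.log ((Bstar + B') / (B + B')) ≤ (Bstar + B') / (B + B') - 1 :=
      Real.log_le_sub_one_of_pos (by positivity)
    have h2 : B * Real.log ((Bstar + B') / (B + B')) ≤ B * ((Bstar + B') / (B + B') - 1) :=
      mul_le_mul_of_nonneg_left hln hB
    have h3 : B * ((Bstar + B') / (B + B') - 1) ≤ Bstar * (Bstar - B) / (Bstar + B') := by
      rw [show B * ((Bstar + B') / (B + B') - 1) = B * (Bstar - B) / (B + B') by
        field_simp; ring]
      rw [div_le_div_iff₀ hT hS]
      nlinarith [mul_nonneg hB' (sq_nonneg (Bstar - B))]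
    have h4 : B * (Bstar / (Bstar + B')) + Bstar * (Bstar - B) / (Bstar + B')
        = Bstar * (1 + C + Bstar / (Bstar + B') - 1 - C) := by
      field_simp; ring
    nlinarith [h2, h3, h4]

lemma log_ge (S T : ℝ) (hS : 0 < S) (hT : 0 < T) :
    1 - T / S ≤ Real.log (S / T) := by
  have h := Real.log_le_sub_one_of_pos (show 0 < T / S by positivity)
  rw [Real.log_div hT.ne' hS.ne'] at h
  rw [Real.log_div hS.ne' hT.ne']
  linarith

lemma foc_upper (G C B' Bi M : ℝ) (hG : 0 < G) (hBi : 0 ≤ Bi)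
    (hS : 0 < Bi + B') (hM : Bi < M)
    (hmax : ∀ B, 0 ≤ B → B ≤ M → invProfit G C B B' ≤ invProfit G C Bi B') :
    Real.log (G / (Bi + B')) - 1 - C ≤ Bi / (Bi + B') := by
  apply le_of_forall_pos_le_add
  intro ε hε
  have hεS : 0 < ε * (Bi + B') := mul_pos hε hS
  obtain ⟨δ, hδdef⟩ : ∃ d : ℝ, d = min (M - Bi) (ε * (Bi + B')) / 2 := ⟨_, rfl⟩
  have hδ : 0 < δ := by
    rw [hδdef]; have := lt_min (show (0:ℝ) < M - Bi by linarith) hεS; linarith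
  have hδ1 : δ ≤ M - Bi := by
    rw [hδdef]
    have h := min_le_left (M - Bi) (ε * (Bi + B'))
    have h0 := lt_min (show (0:ℝ) < M - Bi by linarith) hεS
    linarith
  have hδ2 : δ ≤ ε * (Bi + B') := by
    rw [hδdef]
    have h := min_le_right (M - Bi) (ε * (Bi + B'))
    have h0 := lt_min (show (0:ℝ) < M - Bi by linarith) hεS
    linarith
  clear hδdef
  have hT : 0 < Bi + δ + B' := by linarith
  have hmax' := hmax (Bi + δ) (by linarith) (by linarith)
  unfold invProfit at hmax'
  have hlog : Real.log (G / (Bi + δ + B')) =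
      Real.log (G / (Bi + B')) + Real.log ((Bi + B') / (Bi + δ + B')) := by
    rw [Real.log_div hG.ne' hT.ne', Real.log_div hG.ne' hS.ne',
      Real.log_div hS.ne' hT.ne']; ring
  have hlow : Real.log (G / (Bi + B')) - δ / (Bi + B') ≤ Real.log (G / (Bi + δ + B')) := by
    rw [hlog]
    have h := log_ge (Bi + B') (Bi + δ + B') hS hT
    have h1 : 1 - (Bi + δ + B') / (Bi + B') = - (δ / (Bi + B')) := by
      field_simp; ring
    linarith [h1 ▸ h]
  set L := Real.log (G / (Bi + B')) with hL
  have h1 : (Bi + δ) * ((L - 1 - C) - δ / (Bi + B')) ≤ Bi * (L - 1 - C) := by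
    calc (Bi + δ) * ((L - 1 - C) - δ / (Bi + B'))
        ≤ (Bi + δ) * (Real.log (G / (Bi + δ + B')) - 1 - C) := by
          apply mul_le_mul_of_nonneg_left _ (by linarith)
          linarith
      _ ≤ Bi * (L - 1 - C) := hmax'
  have h2 : (L - 1 - C) * δ ≤ ((Bi + δ) / (Bi + B')) * δ := by
    have e : (Bi + δ) * ((L - 1 - C) - δ / (Bi + B')) =
        Bi * (L - 1 - C) + (L - 1 - C) * δ - ((Bi + δ) / (Bi + B')) * δ := by
      field_simp
    rw [e] at h1; linarith
  have h3 : L - 1 - C ≤ (Bi + δ) / (Bi + B') := le_of_mul_le_mul_right h2 hδ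
  have h5 : (Bi + δ) / (Bi + B') ≤ Bi / (Bi + B') + ε := by
    rw [add_div]
    have : δ / (Bi + B') ≤ ε := by rw [div_le_iff₀ hS]; linarith
    linarith
  linarith

lemma foc_lower (G C B' Bi M : ℝ) (hG : 0 < G) (hB' : 0 ≤ B') (hBi : 0 < Bi)
    (hBiM : Bi ≤ M)
    (hmax : ∀ B, 0 ≤ B → B ≤ M → invProfit G C B B' ≤ invProfit G C Bi B') :
    Bi / (Bi + B') ≤ Real.log (G / (Bi + B')) - 1 - C := by
  have hS : 0 < Bi + B' := by linarith
  apply le_of_forall_pos_le_add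
  intro ε hε
  have hεS : 0 < ε * (Bi + B') := mul_pos hε hS
  obtain ⟨δ, hδdef⟩ : ∃ d : ℝ, d = min Bi (ε * (Bi + B')) / 2 := ⟨_, rfl⟩
  have hδ : 0 < δ := by
    rw [hδdef]; have := lt_min hBi hεS; linarith
  have hδ1 : δ ≤ Bi / 2 := by
    rw [hδdef]
    have h := min_le_left Bi (ε * (Bi + B'))
    have h0 := lt_min hBi hεS
    linarith
  have hδ2 : δ ≤ ε * (Bi + B') := by
    rw [hδdef]
    have h := min_le_right Bi (ε * (Bi + B'))
    have h0 := lt_min hBi hεS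
    linarith
  clear hδdef
  have hT : 0 < Bi - δ + B' := by linarith
  have hmax' := hmax (Bi - δ) (by linarith) (by linarith)
  unfold invProfit at hmax'
  have hlog : Real.log (G / (Bi - δ + B')) =
      Real.log (G / (Bi + B')) + Real.log ((Bi + B') / (Bi - δ + B')) := by
    rw [Real.log_div hG.ne' hT.ne', Real.log_div hG.ne' hS.ne',
      Real.log_div hS.ne' hT.ne']; ring
  have hlow : Real.log (G / (Bi + B')) + δ / (Bi + B') ≤ Real.log (G / (Bi - δ + B')) := by
    rw [hlog]
    have h := log_ge (Bi + B') (Bi - δ + B') hS hT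
    have h1 : 1 - (Bi - δ + B') / (Bi + B') = δ / (Bi + B') := by
      field_simp; ring
    linarith [h1 ▸ h]
  set L := Real.log (G / (Bi + B')) with hL
  have h1 : (Bi - δ) * ((L - 1 - C) + δ / (Bi + B')) ≤ Bi * (L - 1 - C) := by
    calc (Bi - δ) * ((L - 1 - C) + δ / (Bi + B'))
        ≤ (Bi - δ) * (Real.log (G / (Bi - δ + B')) - 1 - C) := by
          apply mul_le_mul_of_nonneg_left _ (by linarith)
          linarith
      _ ≤ Bi * (L - 1 - C) := hmax'
  have h2 : ((Bi - δ) / (Bi + B')) * δ ≤ (L - 1 - C) * δ := by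
    have e : (Bi - δ) * ((L - 1 - C) + δ / (Bi + B')) =
        Bi * (L - 1 - C) - (L - 1 - C) * δ + ((Bi - δ) / (Bi + B')) * δ := by
      field_simp
    rw [e] at h1; linarith
  have h3 : (Bi - δ) / (Bi + B') ≤ L - 1 - C := le_of_mul_le_mul_right h2 hδ
  have h5 : Bi / (Bi + B') ≤ (Bi - δ) / (Bi + B') + ε := by
    rw [sub_div]
    have : δ / (Bi + B') ≤ ε := by rw [div_le_iff₀ hS]; linarith
    linarith
  linarith

/-- value of a zero-profit corner -/
lemma invProfit_zero (G C B' : ℝ) : invProfit G C 0 B' = 0 := by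
  simp [invProfit]

lemma invProfit_special (G C : ℝ) (hG : 0 < G) :
    invProfit G C (G * Real.exp (-(2 + C))) 0 = G * Real.exp (-(2 + C)) := by
  unfold invProfit
  have h1 : G / (G * Real.exp (-(2 + C)) + 0) = Real.exp (2 + C) := by
    rw [add_zero, show G / (G * Real.exp (-(2 + C))) = (Real.exp (-(2 + C)))⁻¹ by
      field_simp, ← Real.exp_neg, neg_neg]
  rw [h1, Real.log_exp]; ring

set_option maxHeartbeats 1000000 in
/-- Theorem 2, high comparable costs regime (`Ci + Cj > 1`, `|Cj − Ci| ≤ 1`):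
`Bi* = (1 + Cj − Ci)·G·e^{−(Ci+Cj+3)/2}/2`, `Bj* = (1 + Ci − Cj)·G·e^{−(Ci+Cj+3)/2}/2`
is the unique Nash equilibrium of the investment game, with profits
`((1 + Cj − Ci)/2)²·G·e^{−(Ci+Cj+3)/2}` and `((1 + Ci − Cj)/2)²·G·e^{−(Ci+Cj+3)/2}`. -/
theorem stmt_9 (G Ci Cj : ℝ) (hG : 0 < G) (hCi : 0 < Ci) (hCj : 0 < Cj)
    (hsum : 1 < Ci + Cj) (hdiff : |Cj - Ci| ≤ 1) :
    IsInvestmentNE G Ci Cj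
      ((1 + Cj - Ci) * G * Real.exp (-((Ci + Cj + 3) / 2)) / 2)
      ((1 + Ci - Cj) * G * Real.exp (-((Ci + Cj + 3) / 2)) / 2) ∧
    (∀ Bi Bj : ℝ, IsInvestmentNE G Ci Cj Bi Bj →
      Bi = (1 + Cj - Ci) * G * Real.exp (-((Ci + Cj + 3) / 2)) / 2 ∧
      Bj = (1 + Ci - Cj) * G * Real.exp (-((Ci + Cj + 3) / 2)) / 2) ∧
    invProfit G Ci
        ((1 + Cj - Ci) * G * Real.exp (-((Ci + Cj + 3) / 2)) / 2)
        ((1 + Ci - Cj) * G * Real.exp (-((Ci + Cj + 3) / 2)) / 2)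
      = ((1 + Cj - Ci) / 2) ^ 2 * G * Real.exp (-((Ci + Cj + 3) / 2)) ∧
    invProfit G Cj
        ((1 + Ci - Cj) * G * Real.exp (-((Ci + Cj + 3) / 2)) / 2)
        ((1 + Cj - Ci) * G * Real.exp (-((Ci + Cj + 3) / 2)) / 2)
      = ((1 + Ci - Cj) / 2) ^ 2 * G * Real.exp (-((Ci + Cj + 3) / 2)) := by
  obtain ⟨hd1, hd2⟩ := abs_le.mp hdiff
  have hEpos : 0 < Real.exp (-((Ci + Cj + 3) / 2)) := Real.exp_pos _
  set E := Real.exp (-((Ci + Cj + 3) / 2)) with hE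
  have hBis : (0:ℝ) ≤ (1 + Cj - Ci) * G * E / 2 := by
    apply div_nonneg _ (by norm_num)
    exact mul_nonneg (mul_nonneg (by linarith) hG.le) hEpos.le
  have hBjs : (0:ℝ) ≤ (1 + Ci - Cj) * G * E / 2 := by
    apply div_nonneg _ (by norm_num)
    exact mul_nonneg (mul_nonneg (by linarith) hG.le) hEpos.le
  have hGE : 0 < G * E := mul_pos hG hEpos
  have hsum' : (1 + Cj - Ci) * G * E / 2 + (1 + Ci - Cj) * G * E / 2 = G * E := by ring
  have hsum'' : (1 + Ci - Cj) * G * E / 2 + (1 + Cj - Ci) * G * E / 2 = G * E := by ring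
  have hlogS : Real.log (G / (G * E)) = (Ci + Cj + 3) / 2 := by
    rw [show G / (G * E) = E⁻¹ by field_simp, ← Real.exp_neg, neg_neg, Real.log_exp]
  have hfoci : Real.log (G / ((1 + Cj - Ci) * G * E / 2 + (1 + Ci - Cj) * G * E / 2)) =
      1 + Ci + ((1 + Cj - Ci) * G * E / 2) / ((1 + Cj - Ci) * G * E / 2 + (1 + Ci - Cj) * G * E / 2) := by
    rw [hsum', hlogS, show ((1 + Cj - Ci) * G * E / 2) / (G * E) = (1 + Cj - Ci) / 2 by
      field_simp]
    ring
  have hfocj : Real.log (G / ((1 + Ci - Cj) * G * E / 2 + (1 + Cj - Ci) * G * E / 2)) =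
      1 + Cj + ((1 + Ci - Cj) * G * E / 2) / ((1 + Ci - Cj) * G * E / 2 + (1 + Cj - Ci) * G * E / 2) := by
    rw [hsum'', hlogS, show ((1 + Ci - Cj) * G * E / 2) / (G * E) = (1 + Ci - Cj) / 2 by
      field_simp]
    ring
  have hSle : G * E ≤ G * Real.exp (-2) := by
    apply mul_le_mul_of_nonneg_left _ hG.le
    exact Real.exp_le_exp.mpr (by linarith)
  refine ⟨⟨hBis, hBjs, by rw [hsum']; exact hSle, ?_, ?_⟩, ?_, ?_, ?_⟩
  · intro B hB0 _
    exact br_le G Ci _ _ hG hBjs (by rw [hsum']; exact hGE) hfoci B hB0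
  · intro B hB0 _
    exact br_le G Cj _ _ hG hBis (by rw [hsum'']; exact hGE) hfocj B hB0
  · -- uniqueness
    intro Bi Bj hNE
    obtain ⟨hBi, hBj, hsumle, hmaxi, hmaxj⟩ := hNE
    -- Step 1: Bi + Bj > 0
    have hSpos : 0 < Bi + Bj := by
      by_contra h
      push_neg at h
      have hBi0 : Bi = 0 := le_antisymm (by linarith) hBi
      have hBj0 : Bj = 0 := le_antisymm (by linarith) hBj
      have hb : (0:ℝ) < G * Real.exp (-(2 + Ci)) := by positivity
      have hble : G * Real.exp (-(2 + Ci)) ≤ G * Real.exp (-2) - Bj := by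
        rw [hBj0, sub_zero]
        exact mul_le_mul_of_nonneg_left (Real.exp_le_exp.mpr (by linarith)) hG.le
      have := hmaxi (G * Real.exp (-(2 + Ci))) hb.le hble
      rw [hBi0, hBj0] at this
      rw [invProfit_special G Ci hG, invProfit_zero] at this
      linarith
    -- Step 2: Bi + Bj < G * exp(-2)
    have hSlt : Bi + Bj < G * Real.exp (-2) := by
      rcases lt_or_eq_of_le hsumle with h | h
      · exact h
      · exfalso
        have hL2 : Real.log (G / (Bi + Bj)) = 2 := by
          rw [h, show G / (G * Real.exp (-2)) = (Real.exp (-2 : ℝ))⁻¹ by field_simp,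
            ← Real.exp_neg, neg_neg, Real.log_exp]
        rcases eq_or_lt_of_le hBi with hBi0 | hBipos
        · -- Bi = 0, Bj = G e^{-2} > 0
          have hBjpos : 0 < Bj := by rw [← hBi0] at hSpos; linarith
          have hlj := foc_lower G Cj Bi Bj (G * Real.exp (-2) - Bi) hG hBi hBjpos
            (by linarith) hmaxj
          rw [show Bj + Bi = Bi + Bj from add_comm _ _] at hlj
          rw [hL2] at hlj
          have : Bj / (Bi + Bj) = 1 := by
            rw [← hBi0, zero_add, div_self hBjpos.ne']
          rw [this] at hlj; linarith
        rcases eq_or_lt_of_le hBj with hBj0 | hBjpos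
        · have hli := foc_lower G Ci Bj Bi (G * Real.exp (-2) - Bj) hG hBj hBipos
            (by linarith) hmaxi
          rw [hL2] at hli
          have : Bi / (Bi + Bj) = 1 := by
            rw [← hBj0, add_zero, div_self hBipos.ne']
          rw [this] at hli; linarith
        · have hli := foc_lower G Ci Bj Bi (G * Real.exp (-2) - Bj) hG hBj hBipos
            (by linarith) hmaxi
          have hlj := foc_lower G Cj Bi Bj (G * Real.exp (-2) - Bi) hG hBi hBjpos
            (by linarith) hmaxj
          rw [show Bj + Bi = Bi + Bj from add_comm _ _] at hlj
          rw [hL2] at hli hlj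
          have hdiv : Bi / (Bi + Bj) + Bj / (Bi + Bj) = 1 := by
            field_simp
          linarith
    -- FOC upper bounds for both players
    have hui := foc_upper G Ci Bj Bi (G * Real.exp (-2) - Bj) hG hBi hSpos
      (by linarith) hmaxi
    have huj := foc_upper G Cj Bi Bj (G * Real.exp (-2) - Bi) hG hBj
      (by rw [add_comm]; exact hSpos) (by linarith) hmaxj
    rw [show Bj + Bi = Bi + Bj from add_comm _ _] at huj
    set L := Real.log (G / (Bi + Bj)) with hLdef
    -- recovering sum from L
    have hSrec : Bi + Bj = G * Real.exp (-L) := by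
      have h1 : Real.exp L = G / (Bi + Bj) := by
        rw [hLdef]; exact Real.exp_log (by positivity)
      rw [Real.exp_neg, h1]
      field_simp
    have hdiv : Bi / (Bi + Bj) + Bj / (Bi + Bj) = 1 := by field_simp
    rcases eq_or_lt_of_le hBi with hBi0 | hBipos
    · -- Bi = 0 case: forces Ci = 1 + Cj
      have hBjpos : 0 < Bj := by rw [← hBi0] at hSpos; linarith
      have hlj := foc_lower G Cj Bi Bj (G * Real.exp (-2) - Bi) hG hBi hBjpos
        (by linarith) hmaxj
      rw [show Bj + Bi = Bi + Bj from add_comm _ _] at hlj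
      have hBj1 : Bj / (Bi + Bj) = 1 := by rw [← hBi0, zero_add, div_self hBjpos.ne']
      have hBi0' : Bi / (Bi + Bj) = 0 := by rw [← hBi0, zero_div]
      rw [hBj1] at hlj huj
      rw [hBi0'] at hui
      have hLval : L = 2 + Cj := by linarith
      have hCieq : Ci = 1 + Cj := by linarith
      constructor
      · rw [hCieq, ← hBi0]; ring_nf
      · have : Bj = G * Real.exp (-L) := by rw [← hBi0] at hSrec; linarith
        rw [this, hLval, hE, hCieq,
          show -((1 + Cj + Cj + 3) / 2) = -(2 + Cj) by ring]
        ring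
    rcases eq_or_lt_of_le hBj with hBj0 | hBjpos
    · -- Bj = 0 case: forces Cj = 1 + Ci
      have hli := foc_lower G Ci Bj Bi (G * Real.exp (-2) - Bj) hG hBj hBipos
        (by linarith) hmaxi
      have hBi1 : Bi / (Bi + Bj) = 1 := by rw [← hBj0, add_zero, div_self hBipos.ne']
      have hBj0' : Bj / (Bi + Bj) = 0 := by rw [← hBj0, zero_div]
      rw [hBi1] at hli hui
      rw [hBj0'] at huj
      have hLval : L = 2 + Ci := by linarith
      have hCjeq : Cj = 1 + Ci := by linarith
      constructor
      · have : Bi = G * Real.exp (-L) := by rw [← hBj0] at hSrec; linarith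
        rw [this, hLval, hE, hCjeq,
          show -((Ci + (1 + Ci) + 3) / 2) = -(2 + Ci) by ring]
        ring
      · rw [hCjeq, ← hBj0]; ring_nf
    · -- both positive: interior FOC equalities
      have hli := foc_lower G Ci Bj Bi (G * Real.exp (-2) - Bj) hG hBj hBipos
        (by linarith) hmaxi
      have hlj := foc_lower G Cj Bi Bj (G * Real.exp (-2) - Bi) hG hBi hBjpos
        (by linarith) hmaxj
      rw [show Bj + Bi = Bi + Bj from add_comm _ _] at hlj
      have hxi : Bi / (Bi + Bj) = L - 1 - Ci := le_antisymm hli hui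
      have hxj : Bj / (Bi + Bj) = L - 1 - Cj := le_antisymm hlj huj
      have hLval : L = (Ci + Cj + 3) / 2 := by
        rw [hxi, hxj] at hdiv; linarith
      have hBival : Bi = (L - 1 - Ci) * (Bi + Bj) := by
        rw [← hxi]; field_simp
      have hBjval : Bj = (L - 1 - Cj) * (Bi + Bj) := by
        rw [← hxj]; field_simp
      constructor
      · rw [hBival, hSrec, hLval]; ring
      · rw [hBjval, hSrec, hLval]; ring
  · -- profit of i
    unfold invProfit
    rw [hfoci, hsum', show ((1 + Cj - Ci) * G * E / 2) / (G * E) = (1 + Cj - Ci) / 2 by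
      field_simp]
    ring
  · -- profit of j
    unfold invProfit
    rw [hfocj, hsum'', show ((1 + Ci - Cj) * G * E / 2) / (G * E) = (1 + Ci - Cj) / 2 by
      field_simp]
    ring
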